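/- Consider the linear program: maximize zeta subject to zeta <= b_k * sum_{j=1}^{k} a_j gamma_j for k = 1,...,N+1, sum_{j=1}^{N+1} gamma_j <= P_T, and gamma_j >= 0, where b_1 >= b_2 >= ... >= b_{N+1} > 0 and 0 < a_1 <= a_2 <= ... <= a_{N+1}. Then the optimal value is zeta* = P_T / (sum_{k=1}^{N+1} (1/a_k)(1/b_k - 1/b_{k-1})) with the convention 1/b_0 = 0, achieved by gamma_j* = (zeta*/a_j)(1/b_j - 1/b_{j-1}), and at the optimum all constraints zeta <= b_k sum_{j<=k} a_j gamma_j hold with equality. -/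

import Mathlib

theorem stmt_6 (N : ℕ) (P_T : ℝ) (hP : 0 < P_T) (a b : ℕ → ℝ)
    (ha_pos : ∀ k ∈ Finset.Icc 1 (N + 1), 0 < a k)
    (hb_pos : ∀ k ∈ Finset.Icc 1 (N + 1), 0 < b k)
    (ha_mono : ∀ k ∈ Finset.Icc 1 N, a k ≤ a (k + 1))
    (hb_anti : ∀ k ∈ Finset.Icc 1 N, b (k + 1) ≤ b k) :
    -- `d k` is `1/b_k - 1/b_{k-1}` with the convention `1/b_0 = 0`
    let d : ℕ → ℝ := fun k => if k = 1 then 1 / b 1 else 1 / b k - 1 / b (k - 1)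
    let ζ : ℝ := P_T / ∑ k ∈ Finset.Icc 1 (N + 1), d k / a k
    let γ : ℕ → ℝ := fun j => (ζ / a j) * d j
    -- feasibility of the claimed optimum
    (∀ j ∈ Finset.Icc 1 (N + 1), 0 ≤ γ j) ∧
    (∑ j ∈ Finset.Icc 1 (N + 1), γ j = P_T) ∧
    -- all the rate constraints hold with equality at the optimum
    (∀ k ∈ Finset.Icc 1 (N + 1), ζ = b k * ∑ j ∈ Finset.Icc 1 k, a j * γ j) ∧
    -- optimality: any feasible point has value at most ζ
    (∀ (γ' : ℕ → ℝ) (ζ' : ℝ),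
      (∀ j ∈ Finset.Icc 1 (N + 1), 0 ≤ γ' j) →
      (∑ j ∈ Finset.Icc 1 (N + 1), γ' j ≤ P_T) →
      (∀ k ∈ Finset.Icc 1 (N + 1), ζ' ≤ b k * ∑ j ∈ Finset.Icc 1 k, a j * γ' j) →
      ζ' ≤ ζ) := by
  intro d ζ γ
  have hmem : ∀ k, 1 ≤ k → k ≤ N + 1 → k ∈ Finset.Icc 1 (N + 1) := by
    intro k h1 h2; simp [Finset.mem_Icc, h1, h2]
  have hb1 : 0 < b 1 := hb_pos 1 (hmem 1 le_rfl (by omega))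
  -- d is nonnegative on the range
  have hd_nonneg : ∀ k, 1 ≤ k → k ≤ N + 1 → 0 ≤ d k := by
    intro k h1 h2
    rcases eq_or_lt_of_le h1 with h | h
    · simp only [d, ← h, if_pos rfl]
      positivity
    · have hkm : k - 1 ∈ Finset.Icc 1 N := by simp [Finset.mem_Icc]; omega
      have hanti := hb_anti (k - 1) hkm
      have hk1 : k - 1 + 1 = k := by omega
      rw [hk1] at hanti
      have hbk : 0 < b k := hb_pos k (hmem k h1 h2)
      have : 1 / b (k - 1) ≤ 1 / b k :=
        one_div_le_one_div_of_le hbk hanti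
      simp only [d, if_neg (by omega : ¬ k = 1)]
      linarith
  -- telescoping: partial sums of d
  have htel : ∀ n, 1 ≤ n → n ≤ N + 1 → ∑ j ∈ Finset.Icc 1 n, d j = 1 / b n := by
    intro n h1 h2
    induction n with
    | zero => omega
    | succ m ih =>
      rcases Nat.eq_or_lt_of_le h1 with h | h
      · simp [← h, d]
      · have hm1 : 1 ≤ m := by omega
        have hm2 : m ≤ N + 1 := by omega
        rw [Finset.sum_Icc_succ_top (by omega : 1 ≤ m + 1), ih hm1 hm2]
        simp only [d, if_neg (by omega : ¬ m + 1 = 1), Nat.add_sub_cancel]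
        ring
  -- positivity of the denominator sum
  set S : ℝ := ∑ k ∈ Finset.Icc 1 (N + 1), d k / a k with hS
  have hS_pos : 0 < S := by
    apply Finset.sum_pos'
    · intro i hi
      rw [Finset.mem_Icc] at hi
      exact div_nonneg (hd_nonneg i hi.1 hi.2) (le_of_lt (ha_pos i (hmem i hi.1 hi.2)))
    · refine ⟨1, hmem 1 le_rfl (by omega), ?_⟩
      have ha1 : 0 < a 1 := ha_pos 1 (hmem 1 le_rfl (by omega))
      have : d 1 = 1 / b 1 := by simp [d]
      rw [this]
      positivity
  have hζ_pos : 0 < ζ := div_pos hP hS_pos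
  -- feasibility: nonnegativity
  have hfeas : ∀ j ∈ Finset.Icc 1 (N + 1), 0 ≤ γ j := by
    intro j hj
    rw [Finset.mem_Icc] at hj
    have haj : 0 < a j := ha_pos j (hmem j hj.1 hj.2)
    exact mul_nonneg (le_of_lt (div_pos hζ_pos haj)) (hd_nonneg j hj.1 hj.2)
  -- sum of γ equals P_T
  have hsum : ∑ j ∈ Finset.Icc 1 (N + 1), γ j = P_T := by
    have : ∀ j ∈ Finset.Icc 1 (N + 1), γ j = ζ * (d j / a j) := by
      intro j hj; simp only [γ]; ring
    rw [Finset.sum_congr rfl this, ← Finset.mul_sum, ← hS]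
    field_simp [ζ]
    rw [show ζ = P_T / S from rfl]
    field_simp [hS_pos.ne']
  -- equality constraints
  have heq : ∀ k ∈ Finset.Icc 1 (N + 1), ζ = b k * ∑ j ∈ Finset.Icc 1 k, a j * γ j := by
    intro k hk
    rw [Finset.mem_Icc] at hk
    have hbk : 0 < b k := hb_pos k (hmem k hk.1 hk.2)
    have : ∀ j ∈ Finset.Icc 1 k, a j * γ j = ζ * d j := by
      intro j hj
      rw [Finset.mem_Icc] at hj
      have haj : a j ≠ 0 := ne_of_gt (ha_pos j (hmem j hj.1 (le_trans hj.2 hk.2)))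
      simp only [γ]
      field_simp
    rw [Finset.sum_congr rfl this, ← Finset.mul_sum, htel k hk.1 hk.2]
    field_simp
  refine ⟨hfeas, hsum, heq, ?_⟩
  -- optimality
  intro γ' ζ' hγ'_nonneg hγ'_sum hcons
  -- Abel-type induction
  have key : ∀ n, 1 ≤ n → n ≤ N + 1 →
      ζ' * (∑ k ∈ Finset.Icc 1 n, d k / a k) - ζ' / (b n * a n)
        + (∑ j ∈ Finset.Icc 1 n, a j * γ' j) / a n
      ≤ ∑ j ∈ Finset.Icc 1 n, γ' j := by
    intro n h1 h2
    induction n with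
    | zero => omega
    | succ m ih =>
      rcases Nat.eq_or_lt_of_le h1 with h | h
      · -- base case n = 1
        have ha1 : 0 < a 1 := ha_pos 1 (hmem 1 le_rfl (by omega))
        simp only [← h]
        simp only [Finset.Icc_self, Finset.sum_singleton, d, if_pos rfl, if_true]
        have hb1' : b 1 ≠ 0 := ne_of_gt hb1
        have ha1' : a 1 ≠ 0 := ne_of_gt ha1
        have : ζ' * (1 / b 1 / a 1) - ζ' / (b 1 * a 1) + a 1 * γ' 1 / a 1 = γ' 1 := by
          field_simp
          ring
        linarith [this.ge, this.le]
      · -- inductive step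
        have hm1 : 1 ≤ m := by omega
        have hm2 : m ≤ N + 1 := by omega
        have hmN : m ≤ N := by omega
        have IH := ih hm1 hm2
        have ham : 0 < a m := ha_pos m (hmem m hm1 hm2)
        have ham1 : 0 < a (m + 1) := ha_pos (m + 1) (hmem (m + 1) (by omega) h2)
        have hbm : 0 < b m := hb_pos m (hmem m hm1 hm2)
        have hbm1 : 0 < b (m + 1) := hb_pos (m + 1) (hmem (m + 1) (by omega) h2)
        have hamono : a m ≤ a (m + 1) := ha_mono m (by simp [Finset.mem_Icc]; omega)
        -- constraint at m
        have hTm : ζ' / b m ≤ ∑ j ∈ Finset.Icc 1 m, a j * γ' j := by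
          have := hcons m (hmem m hm1 hm2)
          rw [div_le_iff₀ hbm]; linarith [this]
        set T : ℝ := ∑ j ∈ Finset.Icc 1 m, a j * γ' j with hT
        have hγm1 : 0 ≤ γ' (m + 1) := hγ'_nonneg (m + 1) (hmem (m + 1) (by omega) h2)
        rw [Finset.sum_Icc_succ_top (by omega : 1 ≤ m + 1),
            Finset.sum_Icc_succ_top (by omega : 1 ≤ m + 1),
            Finset.sum_Icc_succ_top (by omega : 1 ≤ m + 1)]
        simp only [d, if_neg (by omega : ¬ m + 1 = 1), Nat.add_sub_cancel]
        -- algebraic identity reducing to the key inequality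
        have hid : ζ' * ((∑ k ∈ Finset.Icc 1 m, d k / a k)
              + (1 / b (m + 1) - 1 / b m) / a (m + 1))
              - ζ' / (b (m + 1) * a (m + 1))
              + (T + a (m + 1) * γ' (m + 1)) / a (m + 1)
            = ζ' * (∑ k ∈ Finset.Icc 1 m, d k / a k)
              - (ζ' / b m) * (1 / a (m + 1)) + T * (1 / a (m + 1)) + γ' (m + 1) := by
          field_simp
          ring
        rw [← hT, hid]
        -- monotone rearrangement step
        have hrecip : 1 / a (m + 1) ≤ 1 / a m := one_div_le_one_div_of_le ham hamono
        have hprod : 0 ≤ (T - ζ' / b m) * (1 / a m - 1 / a (m + 1)) :=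
          mul_nonneg (by linarith) (by linarith)
        have hstep : ζ' * (∑ k ∈ Finset.Icc 1 m, d k / a k)
              - (ζ' / b m) * (1 / a (m + 1)) + T * (1 / a (m + 1))
            ≤ ζ' * (∑ k ∈ Finset.Icc 1 m, d k / a k)
              - (ζ' / b m) * (1 / a m) + T * (1 / a m) := by nlinarith [hprod]
        have hIH' : ζ' * (∑ k ∈ Finset.Icc 1 m, d k / a k)
              - (ζ' / b m) * (1 / a m) + T * (1 / a m) ≤ ∑ j ∈ Finset.Icc 1 m, γ' j := by
          have e1 : ζ' / (b m * a m) = (ζ' / b m) * (1 / a m) := by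
            field_simp
          have e2 : T / a m = T * (1 / a m) := by ring
          rw [← e1, ← e2]
          exact IH
        linarith
  -- conclude
  have hfin := key (N + 1) (by omega) le_rfl
  have hbN : 0 < b (N + 1) := hb_pos (N + 1) (hmem (N + 1) (by omega) le_rfl)
  have haN : 0 < a (N + 1) := ha_pos (N + 1) (hmem (N + 1) (by omega) le_rfl)
  have hTN : ζ' / b (N + 1) ≤ ∑ j ∈ Finset.Icc 1 (N + 1), a j * γ' j := by
    have := hcons (N + 1) (hmem (N + 1) (by omega) le_rfl)
    rw [div_le_iff₀ hbN]; linarith [this]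
  have hpos_term : ζ' / (b (N + 1) * a (N + 1))
      ≤ (∑ j ∈ Finset.Icc 1 (N + 1), a j * γ' j) / a (N + 1) := by
    rw [div_le_div_iff₀ (by positivity) haN] at *
    have := hTN
    rw [div_le_iff₀ hbN] at this
    nlinarith [this, haN.le]
  have hζ'S : ζ' * S ≤ P_T := by
    have : ζ' * S ≤ ∑ j ∈ Finset.Icc 1 (N + 1), γ' j := by
      rw [hS]; linarith [hfin, hpos_term]
    linarith
  rw [show ζ = P_T / S from rfl, le_div_iff₀ hS_pos]
  linarith
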